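/- Every polynomial f of degree n on ℝ^{p+1} can be written as f = Σ_{m=0}^{⌊n/2⌋} r^{2m} h_m, where each h_m is a harmonic polynomial (of degree at most n - 2m) and r² = Σ_j (x^j)². -/

import Mathlib

open MvPolynomial

/-- The Laplacian on polynomials in `p+1` variables, as a linear map. -/
noncomputable def polyLaplacian (p : ℕ) :
    MvPolynomial (Fin (p + 1)) ℝ →ₗ[ℝ] MvPolynomial (Fin (p + 1)) ℝ :=
  ∑ j : Fin (p + 1),
    ((pderiv j).toLinearMap ∘ₗ (pderiv j).toLinearMap)

/-- The polynomial `r² = ∑ⱼ (xʲ)²`. -/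
noncomputable def rSq (p : ℕ) : MvPolynomial (Fin (p + 1)) ℝ :=
  ∑ j : Fin (p + 1), (X j) ^ 2

section Aux

variable {p : ℕ}

lemma polyLaplacian_apply (f : MvPolynomial (Fin (p+1)) ℝ) :
    polyLaplacian p f = ∑ j : Fin (p+1), pderiv j (pderiv j f) := by
  simp [polyLaplacian]

/-- Weight for the Fischer inner product: `∏ (s j)!`. -/
noncomputable def wN (s : Fin (p+1) →₀ ℕ) : ℕ :=
  ∏ j : Fin (p+1), Nat.factorial (s j)

lemma wN_pos (s : Fin (p+1) →₀ ℕ) : 0 < wN s :=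
  Finset.prod_pos fun _ _ => Nat.factorial_pos _

lemma wN_add_single (s : Fin (p+1) →₀ ℕ) (i : Fin (p+1)) :
    wN (s + Finsupp.single i 1) = (s i + 1) * wN s := by
  classical
  rw [wN, wN, Finset.prod_eq_mul_prod_sdiff_singleton_of_mem (Finset.mem_univ i),
      Finset.prod_eq_mul_prod_sdiff_singleton_of_mem (Finset.mem_univ i)
        (fun j => Nat.factorial (s j))]
  have h1 : (s + Finsupp.single i 1 : Fin (p+1) →₀ ℕ) i = s i + 1 := by simp
  have h2 : ∀ j ∈ Finset.univ \ ({i} : Finset (Fin (p+1))),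
      Nat.factorial ((s + Finsupp.single i 1 : Fin (p+1) →₀ ℕ) j) = Nat.factorial (s j) := by
    intro j hj
    have hji : j ≠ i := by simpa using (Finset.mem_sdiff.mp hj).2
    simp [Finsupp.single_apply, Ne.symm hji]
  rw [h1, Finset.prod_congr rfl h2, Nat.factorial_succ, mul_assoc]

lemma coeff_pderiv' (i : Fin (p+1)) (f : MvPolynomial (Fin (p+1)) ℝ)
    (s : Fin (p+1) →₀ ℕ) :
    (pderiv i f).coeff s = ((s i : ℝ) + 1) * f.coeff (s + Finsupp.single i 1) := by
  classical
  induction f using MvPolynomial.induction_on' with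
  | add f g hf hg => simp [hf, hg, mul_add]
  | monomial t a =>
    rw [pderiv_monomial, coeff_monomial, coeff_monomial]
    by_cases h : t = s + Finsupp.single i 1
    · subst h
      have h1 : (s + Finsupp.single i 1) - Finsupp.single i 1 = s := by
        ext j; simp [Finsupp.single_apply]
      have h2 : (s + Finsupp.single i 1 : Fin (p+1) →₀ ℕ) i = s i + 1 := by simp
      rw [if_pos h1, if_pos rfl, h2]
      push_cast; ring
    · rw [if_neg h, mul_zero]
      by_cases h2 : t - Finsupp.single i 1 = s
      · rw [if_pos h2]
        have hti : t i = 0 := by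
          by_contra hne
          apply h
          rw [← h2]
          ext j
          simp only [Finsupp.add_apply, Finsupp.tsub_apply, Finsupp.single_apply]
          rcases eq_or_ne i j with rfl | hij
          · simp; omega
          · simp [hij]
        simp [hti]
      · rw [if_neg h2]

/-- The Fischer pairing. -/
noncomputable def B (p : ℕ) (f g : MvPolynomial (Fin (p+1)) ℝ) : ℝ :=
  ∑ s ∈ f.support, (wN s : ℝ) * f.coeff s * g.coeff s

lemma B_eq_of_subset {f g : MvPolynomial (Fin (p+1)) ℝ}
    {A : Finset (Fin (p+1) →₀ ℕ)} (hA : f.support ⊆ A) :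
    B p f g = ∑ s ∈ A, (wN s : ℝ) * f.coeff s * g.coeff s :=
  Finset.sum_subset hA (fun s _ hs => by
    simp [MvPolynomial.notMem_support_iff.1 hs])

lemma B_add_left (f₁ f₂ g : MvPolynomial (Fin (p+1)) ℝ) :
    B p (f₁ + f₂) g = B p f₁ g + B p f₂ g := by
  classical
  rw [B_eq_of_subset (A := f₁.support ∪ f₂.support)
        MvPolynomial.support_add,
      B_eq_of_subset (A := f₁.support ∪ f₂.support) Finset.subset_union_left,
      B_eq_of_subset (A := f₁.support ∪ f₂.support) Finset.subset_union_right,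
      ← Finset.sum_add_distrib]
  exact Finset.sum_congr rfl fun s _ => by rw [coeff_add]; ring

lemma B_zero_left (g : MvPolynomial (Fin (p+1)) ℝ) : B p 0 g = 0 := by simp [B]

lemma B_zero_right (f : MvPolynomial (Fin (p+1)) ℝ) : B p f 0 = 0 := by simp [B]

lemma B_sum_left {ι : Type*} (t : Finset ι) (F : ι → MvPolynomial (Fin (p+1)) ℝ)
    (g : MvPolynomial (Fin (p+1)) ℝ) :
    B p (∑ j ∈ t, F j) g = ∑ j ∈ t, B p (F j) g := by
  classical
  induction t using Finset.induction_on with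
  | empty => simp [B_zero_left]
  | insert _ _ hj ih => rw [Finset.sum_insert hj, Finset.sum_insert hj, B_add_left, ih]

lemma B_sum_right {ι : Type*} (t : Finset ι) (f : MvPolynomial (Fin (p+1)) ℝ)
    (G : ι → MvPolynomial (Fin (p+1)) ℝ) :
    B p f (∑ j ∈ t, G j) = ∑ j ∈ t, B p f (G j) := by
  simp only [B, MvPolynomial.coeff_sum, Finset.mul_sum]
  rw [Finset.sum_comm]

lemma B_X_mul (i : Fin (p+1)) (f g : MvPolynomial (Fin (p+1)) ℝ) :
    B p (X i * f) g = B p f (pderiv i g) := by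
  classical
  rw [B, B, MvPolynomial.support_X_mul, Finset.sum_map]
  apply Finset.sum_congr rfl
  intro s _
  rw [addLeftEmbedding_apply, MvPolynomial.coeff_X_mul, coeff_pderiv',
    add_comm (Finsupp.single i 1) s, wN_add_single]
  push_cast
  ring

lemma B_rSq_mul (f g : MvPolynomial (Fin (p+1)) ℝ) :
    B p (rSq p * f) g = B p f (polyLaplacian p g) := by
  have h1 : rSq p * f = ∑ j : Fin (p+1), X j * (X j * f) := by
    rw [rSq, Finset.sum_mul]
    exact Finset.sum_congr rfl fun j _ => by ring
  rw [h1, B_sum_left, polyLaplacian_apply, B_sum_right]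
  exact Finset.sum_congr rfl fun j _ => by rw [B_X_mul, B_X_mul]

lemma eq_zero_of_B_self {f : MvPolynomial (Fin (p+1)) ℝ} (h : B p f f = 0) : f = 0 := by
  classical
  have hterm : ∀ s ∈ f.support, (0:ℝ) ≤ (wN s : ℝ) * f.coeff s * f.coeff s := by
    intro s _
    have : (0:ℝ) ≤ (wN s : ℝ) := Nat.cast_nonneg _
    nlinarith [sq_nonneg (f.coeff s)]
  have hall := (Finset.sum_eq_zero_iff_of_nonneg hterm).1 h
  ext s
  rw [MvPolynomial.coeff_zero]
  by_cases hs : s ∈ f.support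
  · have h0 := hall s hs
    have hw : (0:ℝ) < (wN s : ℝ) := by exact_mod_cast wN_pos s
    rw [mul_assoc] at h0
    rcases mul_eq_zero.1 h0 with h2 | h2
    · exact absurd h2 hw.ne'
    · exact mul_self_eq_zero.1 h2
  · exact MvPolynomial.notMem_support_iff.1 hs

lemma rSq_ne_zero : rSq p ≠ 0 := by
  intro h
  have := congrArg (eval fun _ => (1:ℝ)) h
  simp [rSq] at this
  have hp : (0:ℝ) < (p:ℝ) + 1 := by positivity
  linarith

lemma g_eq_zero_of_laplacian (g : MvPolynomial (Fin (p+1)) ℝ)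
    (h : polyLaplacian p (rSq p * g) = 0) : g = 0 := by
  have h1 : B p (rSq p * g) (rSq p * g) = 0 := by
    rw [B_rSq_mul, h, B_zero_right]
  have h2 := eq_zero_of_B_self h1
  rcases mul_eq_zero.1 h2 with h3 | h3
  · exact absurd h3 rSq_ne_zero
  · exact h3

lemma totalDegree_pderiv_le (i : Fin (p+1)) (f : MvPolynomial (Fin (p+1)) ℝ) :
    (pderiv i f).totalDegree ≤ f.totalDegree - 1 := by
  apply Finset.sup_le
  intro s hs
  have hc : (pderiv i f).coeff s ≠ 0 := MvPolynomial.mem_support_iff.1 hs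
  rw [coeff_pderiv'] at hc
  have hc2 : f.coeff (s + Finsupp.single i 1) ≠ 0 := fun h0 => hc (by rw [h0, mul_zero])
  have hmem : s + Finsupp.single i 1 ∈ f.support := MvPolynomial.mem_support_iff.2 hc2
  have := MvPolynomial.le_totalDegree hmem
  rw [Finsupp.sum_add_index' (fun _ => rfl) (fun _ _ _ => rfl),
    Finsupp.sum_single_index rfl] at this
  omega

lemma totalDegree_laplacian_le (f : MvPolynomial (Fin (p+1)) ℝ) :
    (polyLaplacian p f).totalDegree ≤ f.totalDegree - 2 := by
  rw [polyLaplacian_apply]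
  refine (MvPolynomial.totalDegree_finset_sum _ _).trans (Finset.sup_le fun j _ => ?_)
  have h1 := totalDegree_pderiv_le j (pderiv j f)
  have h2 := totalDegree_pderiv_le j f
  omega

lemma totalDegree_rSq_le : (rSq p).totalDegree ≤ 2 := by
  refine (MvPolynomial.totalDegree_finset_sum _ _).trans (Finset.sup_le fun j _ => ?_)
  rw [MvPolynomial.totalDegree_X_pow]

lemma pderiv_eq_zero_of_totalDegree_eq_zero (i : Fin (p+1))
    {f : MvPolynomial (Fin (p+1)) ℝ} (h : f.totalDegree = 0) : pderiv i f = 0 := by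
  have := totalDegree_pderiv_le i f
  rw [h] at this
  ext s
  rw [coeff_pderiv', MvPolynomial.coeff_zero]
  have : f.coeff (s + Finsupp.single i 1) = 0 := by
    by_contra hc
    have hmem : s + Finsupp.single i 1 ∈ f.support := MvPolynomial.mem_support_iff.2 hc
    have := MvPolynomial.le_totalDegree hmem
    rw [h, Finsupp.sum_add_index' (fun _ => rfl) (fun _ _ _ => rfl),
      Finsupp.sum_single_index rfl] at this
    omega
  rw [this, mul_zero]

lemma harmonic_of_deg_le_one {f : MvPolynomial (Fin (p+1)) ℝ}
    (h : f.totalDegree ≤ 1) : polyLaplacian p f = 0 := by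
  rw [polyLaplacian_apply]
  apply Finset.sum_eq_zero
  intro j _
  have h1 : (pderiv j f).totalDegree = 0 := by
    have := totalDegree_pderiv_le j f
    omega
  rw [pderiv_eq_zero_of_totalDegree_eq_zero j h1]

lemma exists_g (d : ℕ) (F : MvPolynomial (Fin (p+1)) ℝ) (hF : F.totalDegree ≤ d) :
    ∃ g : MvPolynomial (Fin (p+1)) ℝ, g.totalDegree ≤ d ∧
      polyLaplacian p (rSq p * g) = F := by
  set V := restrictTotalDegree (Fin (p+1)) ℝ d with hV
  have hmap : ∀ v : V, polyLaplacian p (rSq p * (v : MvPolynomial (Fin (p+1)) ℝ)) ∈ V := by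
    intro v
    rw [mem_restrictTotalDegree]
    have h1 := totalDegree_laplacian_le (p := p) (rSq p * (v : MvPolynomial (Fin (p+1)) ℝ))
    have h2 := MvPolynomial.totalDegree_mul (rSq p) (v : MvPolynomial (Fin (p+1)) ℝ)
    have h3 : (rSq p).totalDegree ≤ 2 := totalDegree_rSq_le
    have h4 : (v : MvPolynomial (Fin (p+1)) ℝ).totalDegree ≤ d := by
      have := v.2; rwa [mem_restrictTotalDegree] at this
    omega
  let T : V →ₗ[ℝ] V := LinearMap.codRestrict V
    ((polyLaplacian p).comp ((LinearMap.mulLeft ℝ (rSq p)).comp V.subtype)) hmap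
  have hinj : Function.Injective T := by
    rw [injective_iff_map_eq_zero]
    intro v hv
    have : polyLaplacian p (rSq p * (v : MvPolynomial (Fin (p+1)) ℝ)) = 0 := by
      have := congrArg (Subtype.val) hv
      simpa [T, LinearMap.codRestrict] using this
    exact Subtype.ext (g_eq_zero_of_laplacian _ this)
  have hsurj := LinearMap.injective_iff_surjective.mp hinj
  obtain ⟨g, hg⟩ := hsurj ⟨F, by rw [mem_restrictTotalDegree]; exact hF⟩
  refine ⟨g, by have := g.2; rwa [mem_restrictTotalDegree] at this, ?_⟩
  have := congrArg Subtype.val hg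
  simpa [T, LinearMap.codRestrict] using this

lemma main_induction (p : ℕ) (n : ℕ) : ∀ f : MvPolynomial (Fin (p+1)) ℝ, f.totalDegree ≤ n →
    ∃ h : ℕ → MvPolynomial (Fin (p + 1)) ℝ,
      (∀ m, polyLaplacian p (h m) = 0) ∧
      (∀ m, (h m).totalDegree ≤ n - 2 * m) ∧
      f = ∑ m ∈ Finset.range (n / 2 + 1), (rSq p) ^ m * h m := by
  induction n using Nat.strong_induction_on with
  | _ n IH =>
    match n with
    | 0 | 1 =>
      intro f hf
      refine ⟨fun m => if m = 0 then f else 0, ?_, ?_, ?_⟩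
      · intro m
        rcases eq_or_ne m 0 with rfl | hm
        · simpa using harmonic_of_deg_le_one (f := f) (by omega)
        · simp [hm]
      · intro m
        rcases eq_or_ne m 0 with rfl | hm
        · simpa using hf
        · simp [hm]
      · simp
    | (n+2) =>
      intro f hf
      have hΔf : (polyLaplacian p f).totalDegree ≤ n := by
        have := totalDegree_laplacian_le (p := p) f
        omega
      obtain ⟨g, hgdeg, hgΔ⟩ := exists_g n (polyLaplacian p f) hΔf
      obtain ⟨k, hk1, hk2, hk3⟩ := IH n (by omega) g hgdeg
      refine ⟨fun m => Nat.casesOn m (f - rSq p * g) k, ?_, ?_, ?_⟩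
      · intro m
        cases m with
        | zero =>
          show polyLaplacian p (f - rSq p * g) = 0
          rw [map_sub, hgΔ, sub_self]
        | succ m => exact hk1 m
      · intro m
        cases m with
        | zero =>
          show (f - rSq p * g).totalDegree ≤ n + 2 - 2 * 0
          have h1 := MvPolynomial.totalDegree_sub f (rSq p * g)
          have h2 := MvPolynomial.totalDegree_mul (rSq p) g
          have h3 : (rSq p).totalDegree ≤ 2 := totalDegree_rSq_le
          omega
        | succ m =>
          show (k m).totalDegree ≤ n + 2 - 2 * (m + 1)
          have := hk2 m
          omega
      · have hdiv : (n+2)/2 + 1 = (n/2 + 1) + 1 := by omega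
        rw [hdiv, Finset.sum_range_succ']
        have hsum : ∑ i ∈ Finset.range (n/2 + 1),
            rSq p ^ (i+1) * (fun m => Nat.casesOn m (f - rSq p * g) k) (i+1)
            = rSq p * ∑ i ∈ Finset.range (n/2 + 1), rSq p ^ i * k i := by
          rw [Finset.mul_sum]
          refine Finset.sum_congr rfl fun i _ => ?_
          show rSq p ^ (i+1) * k i = rSq p * (rSq p ^ i * k i)
          ring
        rw [hsum, ← hk3]
        show f = rSq p * g + rSq p ^ 0 * (f - rSq p * g)
        ring

end Aux

/-- Every polynomial `f` of degree `n` on `ℝ^{p+1}` can be written as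
`f = ∑_{m=0}^{⌊n/2⌋} r^{2m} h_m` with each `h_m` harmonic of degree at most `n - 2m`. -/
theorem harmonic_decomposition (p n : ℕ) (f : MvPolynomial (Fin (p + 1)) ℝ)
    (hf : f.totalDegree = n) :
    ∃ h : ℕ → MvPolynomial (Fin (p + 1)) ℝ,
      (∀ m, polyLaplacian p (h m) = 0) ∧
      (∀ m, (h m).totalDegree ≤ n - 2 * m) ∧
      f = ∑ m ∈ Finset.range (n / 2 + 1), (rSq p) ^ m * h m :=
  main_induction p n f hf.le
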